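/- arXiv:2511.14251 — 2 statements merged into one kernel-verified Lean document; each statement's English description precedes it below -/
import Mathlib

section
/- In the ring Z[c,y]/(c^p - 2cy, y^2 - ε c^{p-1} y), where ε = 0 if p is even and ε = 1 if p is odd, the elements 1, c, ..., c^{p-1}, y, cy, ..., c^{p-1}y form a Z-module basis; in particular the ring is a free Z-module of rank 2p+1. -/
open MvPolynomial

/-- The cohomology ring `ℤ[c,y]/(c^p - 2cy, y^2 - ε c^(p-1) y)` of an even
(type D) quadric, where `ε = 1` iff `p` is odd; here `c = X 0`, `y = X 1`. -/
noncomputable abbrev EvenQuadricRing (p : ℕ) : Type :=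
  MvPolynomial (Fin 2) ℤ ⧸
    Ideal.span {(X 0 : MvPolynomial (Fin 2) ℤ) ^ p - 2 * X 0 * X 1,
                (X 1 : MvPolynomial (Fin 2) ℤ) ^ 2 -
                  (if p % 2 = 1 then 1 else 0) * X 0 ^ (p - 1) * X 1}

namespace EQR

abbrev P2 : Type := MvPolynomial (Fin 2) ℤ

noncomputable abbrev r1 (p : ℕ) : P2 := (X 0 : P2) ^ p - 2 * X 0 * X 1
noncomputable abbrev r2 (p : ℕ) : P2 :=
  (X 1 : P2) ^ 2 - (if p % 2 = 1 then 1 else 0) * X 0 ^ (p - 1) * X 1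
noncomputable abbrev Ip (p : ℕ) : Ideal P2 := Ideal.span {r1 p, r2 p}

def eps (p : ℕ) : ℤ := if p % 2 = 1 then 1 else 0

lemma ite_eq_C_eps (p : ℕ) :
    (if p % 2 = 1 then (1 : P2) else 0) = C (eps p) := by
  unfold eps; split_ifs <;> simp

/-- normal form coordinates of `c^a y^b` -/
noncomputable def nf (p : ℕ) : ℕ → ℕ → (Fin (2 * p) →₀ ℤ)
  | a, 0 =>
      if h : a < p then Finsupp.single ⟨a, by omega⟩ 1
      else if h2 : a + 1 < 2 * p then Finsupp.single ⟨a + 1, h2⟩ 2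
      else 0
  | a, b + 1 =>
      if h : p + (a + b * (p - 1)) < 2 * p then
        Finsupp.single ⟨p + (a + b * (p - 1)), h⟩ (eps p ^ b)
      else 0

lemma nfA (p : ℕ) (hp : 1 ≤ p) (a b : ℕ) :
    nf p (a + p) b = (2:ℤ) • nf p (a + 1) (b + 1) := by
  cases b with
  | zero =>
      simp only [nf, Nat.zero_add, Nat.mul_zero, Nat.zero_mul, Nat.add_zero]
      rw [dif_neg (by omega)]
      by_cases h : a + p + 1 < 2 * p
      · rw [dif_pos h, dif_pos (by omega : p + (a + 1) < 2 * p)]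
        rw [Finsupp.smul_single]
        congr 1
        exact Fin.ext (by simp; omega)
        simp
      · rw [dif_neg h, dif_neg (by omega : ¬ p + (a + 1) < 2 * p)]
        simp
  | succ b =>
      have hb : p - 1 ≤ (b + 1) * (p - 1) := Nat.le_mul_of_pos_left _ (Nat.succ_pos b)
      simp only [nf]
      rw [dif_neg (by omega), dif_neg (by omega)]
      simp

lemma nfB (p : ℕ) (a b : ℕ) :
    nf p a (b + 2) = eps p • nf p (a + (p - 1)) (b + 1) := by
  have hidx : a + (b + 1) * (p - 1) = a + (p - 1) + b * (p - 1) := by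
    rw [Nat.succ_mul]; ring
  simp only [nf, hidx]
  by_cases h : p + (a + (p - 1) + b * (p - 1)) < 2 * p
  · rw [dif_pos h, dif_pos h, Finsupp.smul_single, smul_eq_mul, ← pow_succ']
  · rw [dif_neg h, dif_neg h, smul_zero]


/-- the coordinate map on polynomials -/
noncomputable def g (p : ℕ) : P2 →ₗ[ℤ] (Fin (2 * p) →₀ ℤ) :=
  (basisMonomials (Fin 2) ℤ).constr ℤ fun m => nf p (m 0) (m 1)

lemma g_monomial (p : ℕ) (m : Fin 2 →₀ ℕ) (c : ℤ) :
    g p (monomial m c) = c • nf p (m 0) (m 1) := by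
  have h : (monomial m c : P2) = c • monomial m 1 := by
    rw [smul_monomial, smul_eq_mul, mul_one]
  have hb : (basisMonomials (Fin 2) ℤ) m = monomial m 1 :=
    congrFun (coe_basisMonomials (Fin 2) ℤ) m
  rw [h, map_smul, g, ← hb, Module.Basis.constr_basis]

lemma g_mul_r1 (p : ℕ) (hp : 1 ≤ p) (q : P2) : g p (q * r1 p) = 0 := by
  have key : (g p).comp (LinearMap.mulRight ℤ (r1 p)) = 0 := by
    refine (basisMonomials (Fin 2) ℤ).ext fun m => ?_
    have hb : (basisMonomials (Fin 2) ℤ) m = monomial m 1 :=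
      congrFun (coe_basisMonomials (Fin 2) ℤ) m
    simp only [LinearMap.comp_apply, LinearMap.mulRight_apply, hb, LinearMap.zero_apply]
    have expand : monomial m 1 * r1 p =
        monomial (m + Finsupp.single 0 p) 1
          - monomial (m + (Finsupp.single 0 1 + Finsupp.single 1 1)) 2 := by
      rw [r1, mul_sub, X_pow_eq_monomial, monomial_mul, mul_one]
      congr 1
      have h2 : (2 : P2) = C (2 : ℤ) := (map_ofNat C 2).symm
      have : (2 : P2) * X 0 * X 1 = monomial (Finsupp.single 0 1 + Finsupp.single 1 1) 2 := by
        rw [X, X, mul_assoc, monomial_mul, mul_one, h2, C_mul_monomial, mul_one]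
      rw [this, monomial_mul, one_mul]
    rw [expand, map_sub, g_monomial, g_monomial]
    have e0 : (m + Finsupp.single (0:Fin 2) p) (0 : Fin 2) = m 0 + p := by simp
    have e1 : (m + Finsupp.single (0:Fin 2) p) (1 : Fin 2) = m 1 := by simp
    have e2 : ((m + (Finsupp.single 0 1 + Finsupp.single 1 1) : Fin 2 →₀ ℕ)) (0 : Fin 2) = m 0 + 1 := by simp
    have e3 : ((m + (Finsupp.single 0 1 + Finsupp.single 1 1) : Fin 2 →₀ ℕ)) (1 : Fin 2) = m 1 + 1 := by simp
    rw [e0, e1, e2, e3, one_smul, nfA p hp (m 0) (m 1)]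
    simp
  have := congrFun (congrArg (fun F => F.toFun) key) q
  simpa using this


lemma g_mul_r2 (p : ℕ) (q : P2) : g p (q * r2 p) = 0 := by
  have key : (g p).comp (LinearMap.mulRight ℤ (r2 p)) = 0 := by
    refine (basisMonomials (Fin 2) ℤ).ext fun m => ?_
    have hb : (basisMonomials (Fin 2) ℤ) m = monomial m 1 :=
      congrFun (coe_basisMonomials (Fin 2) ℤ) m
    simp only [LinearMap.comp_apply, LinearMap.mulRight_apply, hb, LinearMap.zero_apply]
    have expand : monomial m 1 * r2 p =
        monomial (m + Finsupp.single 1 2) 1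
          - monomial (m + (Finsupp.single 0 (p - 1) + Finsupp.single 1 1)) (eps p) := by
      rw [r2, mul_sub, X_pow_eq_monomial, monomial_mul, mul_one, ite_eq_C_eps]
      congr 1
      have h1 : C (eps p) * (X 0 : P2) ^ (p - 1) * X 1 =
          monomial (Finsupp.single 0 (p - 1) + Finsupp.single 1 1) (eps p) := by
        rw [X_pow_eq_monomial, X, C_mul_monomial, mul_one, monomial_mul, mul_one]
      rw [h1, monomial_mul, one_mul]
    rw [expand, map_sub, g_monomial, g_monomial]
    have e0 : ((m + Finsupp.single 1 2 : Fin 2 →₀ ℕ)) (0 : Fin 2) = m 0 := by simp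
    have e1 : ((m + Finsupp.single 1 2 : Fin 2 →₀ ℕ)) (1 : Fin 2) = m 1 + 2 := by simp
    have e2 : ((m + (Finsupp.single 0 (p - 1) + Finsupp.single 1 1) : Fin 2 →₀ ℕ)) (0 : Fin 2)
        = m 0 + (p - 1) := by simp
    have e3 : ((m + (Finsupp.single 0 (p - 1) + Finsupp.single 1 1) : Fin 2 →₀ ℕ)) (1 : Fin 2)
        = m 1 + 1 := by simp
    rw [e0, e1, e2, e3, one_smul, nfB p (m 0) (m 1)]
    simp
  have := congrFun (congrArg (fun F => F.toFun) key) q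
  simpa using this

lemma g_ideal (p : ℕ) (hp : 1 ≤ p) {x : P2} (hx : x ∈ Ip p) : g p x = 0 := by
  rw [Ip, Ideal.mem_span_pair] at hx
  obtain ⟨u, v, rfl⟩ := hx
  rw [map_add, g_mul_r1 p hp u, g_mul_r2 p v, add_zero]

/-- the basis polynomials -/
noncomputable def bel (p : ℕ) (i : Fin (2 * p)) : P2 :=
  if (i : ℕ) < p then (X 0 : P2) ^ (i : ℕ) else (X 0 : P2) ^ ((i : ℕ) - p) * X 1

/-- quotient map as a `ℤ`-linear map -/
noncomputable def mkL (p : ℕ) : P2 →ₗ[ℤ] EvenQuadricRing p :=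
  ((Ideal.Quotient.mk (Ip p)).toAddMonoidHom).toIntLinearMap

@[simp] lemma mkL_apply (p : ℕ) (x : P2) :
    mkL p x = Ideal.Quotient.mk (Ip p) x := rfl

noncomputable def FL (p : ℕ) : (Fin (2 * p) →₀ ℤ) →ₗ[ℤ] P2 :=
  Finsupp.linearCombination ℤ (bel p)

noncomputable def f (p : ℕ) : (Fin (2 * p) →₀ ℤ) →ₗ[ℤ] EvenQuadricRing p :=
  (mkL p).comp (FL p)

lemma f_single (p : ℕ) (i : Fin (2 * p)) (c : ℤ) :
    f p (Finsupp.single i c) = c • Ideal.Quotient.mk (Ip p) (bel p i) := by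
  simp [f, FL, Finsupp.linearCombination_single, map_smul]

lemma g_bel (p : ℕ) (hp : 2 ≤ p) (i : Fin (2 * p)) :
    g p (bel p i) = Finsupp.single i 1 := by
  by_cases h : (i : ℕ) < p
  · have : bel p i = monomial (Finsupp.single 0 (i : ℕ)) 1 := by
      rw [bel, if_pos h, X_pow_eq_monomial]
    rw [this, g_monomial, one_smul]
    have e0 : (Finsupp.single (0 : Fin 2) (i : ℕ)) (0 : Fin 2) = (i : ℕ) := by simp
    have e1 : (Finsupp.single (0 : Fin 2) (i : ℕ)) (1 : Fin 2) = 0 := by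
      simp [Finsupp.single_apply]
    rw [e0, e1]
    simp only [nf]
    rw [dif_pos h]
  · have : bel p i = monomial (Finsupp.single 0 ((i : ℕ) - p) + Finsupp.single 1 1) 1 := by
      rw [bel, if_neg h, X_pow_eq_monomial, X, monomial_mul, mul_one]
    rw [this, g_monomial, one_smul]
    have e0 : ((Finsupp.single 0 ((i : ℕ) - p) + Finsupp.single 1 1 : Fin 2 →₀ ℕ)) (0 : Fin 2)
        = (i : ℕ) - p := by simp [Finsupp.single_apply]
    have e1 : ((Finsupp.single 0 ((i : ℕ) - p) + Finsupp.single 1 1 : Fin 2 →₀ ℕ)) (1 : Fin 2)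
        = 1 := by simp [Finsupp.single_apply]
    rw [e0, e1]
    simp only [nf]
    have hi := i.isLt
    rw [dif_pos (by omega : p + ((i : ℕ) - p + 0 * (p - 1)) < 2 * p)]
    have : (⟨p + ((i : ℕ) - p + 0 * (p - 1)), by omega⟩ : Fin (2 * p)) = i :=
      Fin.ext (by simp; omega)
    rw [this, pow_zero]


lemma r1_mem (p : ℕ) : r1 p ∈ Ip p := Ideal.subset_span (Set.mem_insert _ _)
lemma r2_mem (p : ℕ) : r2 p ∈ Ip p :=
  Ideal.subset_span (Set.mem_insert_iff.2 (Or.inr rfl))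

lemma relA' (p : ℕ) (a b : ℕ) :
    Ideal.Quotient.mk (Ip p) ((X 0 : P2) ^ (a + p) * X 1 ^ b) =
      (2 : ℤ) • Ideal.Quotient.mk (Ip p) ((X 0 : P2) ^ (a + 1) * X 1 ^ (b + 1)) := by
  rw [← map_zsmul (Ideal.Quotient.mk (Ip p))]
  rw [Ideal.Quotient.eq]
  have h2 : ((2 : ℤ) • ((X 0 : P2) ^ (a + 1) * X 1 ^ (b + 1)))
      = 2 * ((X 0 : P2) ^ (a + 1) * X 1 ^ (b + 1)) := by
    rw [smul_eq_C_mul, (map_ofNat C 2 : C (2:ℤ) = (2:P2))]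
  rw [h2]
  have : (X 0 : P2) ^ (a + p) * X 1 ^ b - 2 * ((X 0 : P2) ^ (a + 1) * X 1 ^ (b + 1))
      = (X 0 : P2) ^ a * X 1 ^ b * r1 p := by
    rw [r1]; ring
  rw [this]
  exact Ideal.mul_mem_left _ _ (r1_mem p)

lemma relB' (p : ℕ) (a b : ℕ) :
    Ideal.Quotient.mk (Ip p) ((X 0 : P2) ^ a * X 1 ^ (b + 2)) =
      eps p • Ideal.Quotient.mk (Ip p) ((X 0 : P2) ^ (a + (p - 1)) * X 1 ^ (b + 1)) := by
  rw [← map_zsmul (Ideal.Quotient.mk (Ip p))]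
  rw [Ideal.Quotient.eq]
  have h2 : (eps p • ((X 0 : P2) ^ (a + (p - 1)) * X 1 ^ (b + 1)))
      = C (eps p) * ((X 0 : P2) ^ (a + (p - 1)) * X 1 ^ (b + 1)) := smul_eq_C_mul _ _
  rw [h2]
  have : (X 0 : P2) ^ a * X 1 ^ (b + 2)
        - C (eps p) * ((X 0 : P2) ^ (a + (p - 1)) * X 1 ^ (b + 1))
      = (X 0 : P2) ^ a * X 1 ^ b * r2 p := by
    rw [r2, ite_eq_C_eps]; ring
  rw [this]
  exact Ideal.mul_mem_left _ _ (r2_mem p)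

lemma Z1 (p : ℕ) (hp : 2 ≤ p) (a : ℕ) :
    Ideal.Quotient.mk (Ip p) ((X 0 : P2) ^ (a + p) * X 1 ^ 1) = 0 := by
  have h1 := relA' p a 1
  have h2 := relB' p (a + 1) 0
  rw [(by omega : a + 1 + (p - 1) = a + p)] at h2
  simp only [Nat.reduceAdd] at h1 h2
  rw [h2] at h1
  set x := Ideal.Quotient.mk (Ip p) ((X 0 : P2) ^ (a + p) * X 1 ^ 1) with hx
  by_cases hodd : p % 2 = 1
  · simp only [eps, hodd, if_true, reduceIte, one_smul] at h1
    rw [two_smul] at h1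
    exact (right_eq_add.mp h1)
  · simp only [eps, hodd, reduceIte, if_false, zero_smul, smul_zero] at h1
    exact h1

lemma mem1 (p : ℕ) (hp : 2 ≤ p) (a : ℕ) :
    Ideal.Quotient.mk (Ip p) ((X 0 : P2) ^ a * X 1 ^ 1) ∈ LinearMap.range (f p) := by
  by_cases h : a < p
  · refine ⟨Finsupp.single ⟨p + a, by omega⟩ 1, ?_⟩
    rw [f_single, one_smul]
    have : bel p ⟨p + a, by omega⟩ = (X 0 : P2) ^ a * X 1 ^ 1 := by
      simp only [bel, Fin.val_mk]
      rw [if_neg (by omega), pow_one, Nat.add_sub_cancel_left]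
    rw [this]
  · rw [(by omega : a = (a - p) + p), Z1 p hp (a - p)]
    exact zero_mem _

lemma memS (p : ℕ) (hp : 2 ≤ p) (b a : ℕ) :
    Ideal.Quotient.mk (Ip p) ((X 0 : P2) ^ a * X 1 ^ (b + 1)) ∈ LinearMap.range (f p) := by
  induction b generalizing a with
  | zero => exact mem1 p hp a
  | succ b ih =>
      rw [relB' p a b]
      exact Submodule.smul_mem _ _ (ih _)

lemma mem0 (p : ℕ) (hp : 2 ≤ p) (a : ℕ) :
    Ideal.Quotient.mk (Ip p) ((X 0 : P2) ^ a * X 1 ^ 0) ∈ LinearMap.range (f p) := by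
  by_cases h : a < p
  · refine ⟨Finsupp.single ⟨a, by omega⟩ 1, ?_⟩
    rw [f_single, one_smul]
    have : bel p ⟨a, by omega⟩ = (X 0 : P2) ^ a * X 1 ^ 0 := by
      simp only [bel, Fin.val_mk]
      rw [if_pos h, pow_zero, mul_one]
    rw [this]
  · rw [(by omega : a = (a - p) + p), relA' p (a - p) 0]
    exact Submodule.smul_mem _ _ (memS p hp 0 (a - p + 1))

lemma mono_eq (m : Fin 2 →₀ ℕ) :
    (monomial m 1 : P2) = X 0 ^ (m 0) * X 1 ^ (m 1) := by
  have hm : m = Finsupp.single 0 (m 0) + Finsupp.single 1 (m 1) := by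
    ext i; fin_cases i <;> simp [Finsupp.single_apply]
  rw [X_pow_eq_monomial, X_pow_eq_monomial, monomial_mul, mul_one]
  conv_lhs => rw [hm]

lemma surj (p : ℕ) (hp : 2 ≤ p) : Function.Surjective (f p) := by
  intro z
  obtain ⟨q, rfl⟩ := Ideal.Quotient.mk_surjective z
  suffices h : Ideal.Quotient.mk (Ip p) q ∈ LinearMap.range (f p) by
    obtain ⟨w, hw⟩ := h; exact ⟨w, hw⟩
  induction q using MvPolynomial.induction_on' with
  | monomial m c =>
      have h : (monomial m c : P2) = c • monomial m 1 := by
        rw [smul_monomial, smul_eq_mul, mul_one]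
      rw [h, ← mkL_apply, map_smul, mkL_apply, mono_eq]
      refine Submodule.smul_mem _ _ ?_
      cases hb : m 1 with
      | zero => exact mem0 p hp (m 0)
      | succ b => exact memS p hp b (m 0)
  | add q r hq hr =>
      rw [map_add]
      exact add_mem hq hr

lemma inj (p : ℕ) (hp : 2 ≤ p) : Function.Injective (f p) := by
  have hgFL : (g p).comp (FL p) = LinearMap.id := by
    refine Finsupp.lhom_ext fun i c => ?_
    simp only [LinearMap.comp_apply, LinearMap.id_apply, FL,
      Finsupp.linearCombination_single]
    rw [map_smul, g_bel p hp, Finsupp.smul_single, smul_eq_mul, mul_one]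
  have key : ∀ z, f p z = 0 → z = 0 := by
    intro z hz
    have hmem : FL p z ∈ Ip p := Ideal.Quotient.eq_zero_iff_mem.1 hz
    have h0 : g p (FL p z) = 0 := g_ideal p (by omega) hmem
    have := LinearMap.congr_fun hgFL z
    simp only [LinearMap.comp_apply, LinearMap.id_apply] at this
    rw [h0] at this
    exact this.symm
  intro a b h
  have : f p (a - b) = 0 := by rw [map_sub, h, sub_self]
  have := key _ this
  exact sub_eq_zero.mp this

end EQR

/-- In `ℤ[c,y]/(c^p - 2cy, y^2 - ε c^(p-1) y)` (with `ε = 1` iff `p` odd),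
the elements `1, c, …, c^(p-1), y, cy, …, c^(p-1) y` form a ℤ-module basis;
in particular the ring is a free ℤ-module. -/
theorem stmt1 (p : ℕ) (hp : 2 ≤ p) :
    ∃ B : Module.Basis (Fin (2 * p)) ℤ (EvenQuadricRing p),
      ∀ i : Fin (2 * p),
        B i = Ideal.Quotient.mk _
          (if (i : ℕ) < p then (X 0 : MvPolynomial (Fin 2) ℤ) ^ (i : ℕ)
           else (X 0 : MvPolynomial (Fin 2) ℤ) ^ ((i : ℕ) - p) * X 1) := by
  refine ⟨Module.Basis.ofRepr (LinearEquiv.ofBijective (EQR.f p)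
    ⟨EQR.inj p hp, EQR.surj p hp⟩).symm, fun i => ?_⟩
  rw [Module.Basis.coe_ofRepr]
  simp only [LinearEquiv.symm_symm, LinearEquiv.ofBijective_apply]
  change EQR.f p (Finsupp.single i 1) = _
  rw [EQR.f_single, one_smul]
  rfl
end

section
/- In the ring Z[c,y]/(c^p - 2cy, y^2 - ε c^{p-1}y) with ε ≡ p mod 2 in {0,1}, the element c is nilpotent with c^{2p-1} = 0; moreover c^{2p-2} = 2 c^{p-1} y ≠ 0 when p is even, and c^{2p-2} ≠ 0 when p is odd. -/
open MvPolynomial Finsupp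

lemma nonmem (q : ℕ) (e : MvPolynomial (Fin 2) ℤ) :
    (X 0 : MvPolynomial (Fin 2) ℤ)^(2*q+2) ∉
      Ideal.span {(X 0 : MvPolynomial (Fin 2) ℤ)^(q+2) - 2 * X 0 * X 1,
        (X 1 : MvPolynomial (Fin 2) ℤ)^2 - e * X 0^(q+1) * X 1} := by
  intro h
  rw [Ideal.mem_span_pair] at h
  obtain ⟨a, b, hab⟩ := h
  have h2 : (C 2 : MvPolynomial (Fin 2) ℤ) = 2 := by simp
  have E : a * X 0^(q+2) + b * X 1^2 =
      X 0^(2*q+2) + (C 2 * a * X 0) * X 1 + ((b*e) * X 0^(q+1)) * X 1 := by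
    linear_combination hab - (a * X 0 * X 1) * h2
  have s1 : (Finsupp.single 0 (2*q+2) - Finsupp.single 0 (q+2) : Fin 2 →₀ ℕ)
      = Finsupp.single 0 q := by rw [← Finsupp.single_tsub]; congr 1; omega
  have s3 : (Finsupp.single 0 (q+1) - Finsupp.single 0 1 : Fin 2 →₀ ℕ)
      = Finsupp.single 0 q := by rw [← Finsupp.single_tsub]; norm_num
  have s6 : (Finsupp.single 1 2 - Finsupp.single 1 1 : Fin 2 →₀ ℕ)
      = Finsupp.single 1 1 := by rw [← Finsupp.single_tsub]
  -- coefficient at X0^(2q+2)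
  have E1 := congrArg (coeff (Finsupp.single 0 (2*q+2))) E
  simp only [coeff_add, X_pow_eq_monomial, coeff_mul_monomial', coeff_mul_X',
    coeff_C_mul, coeff_monomial, s1] at E1
  simp only [Finsupp.le_def, Finsupp.ext_iff, Fin.forall_fin_two, Finsupp.single_apply,
    Finsupp.mem_support_iff, Finsupp.add_apply] at E1
  norm_num at E1
  -- coefficient at X0^(q+1) X1
  have E2 := congrArg (coeff (Finsupp.single 0 (q+1) + Finsupp.single 1 1)) E
  simp only [coeff_add, X_pow_eq_monomial, coeff_mul_monomial', coeff_mul_X',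
    coeff_C_mul, coeff_monomial, add_tsub_cancel_right, s3, tsub_self] at E2
  simp only [Finsupp.le_def, Finsupp.ext_iff, Fin.forall_fin_two, Finsupp.single_apply,
    Finsupp.mem_support_iff, Finsupp.add_apply] at E2
  norm_num at E2
  -- coefficient at X1^2
  have E3 := congrArg (coeff (Finsupp.single 1 2)) E
  simp only [coeff_add, X_pow_eq_monomial, coeff_mul_monomial', coeff_mul_X',
    coeff_C_mul, coeff_monomial, tsub_self, s6] at E3
  simp only [Finsupp.le_def, Finsupp.ext_iff, Fin.forall_fin_two, Finsupp.single_apply,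
    Finsupp.mem_support_iff, Finsupp.add_apply] at E3
  norm_num at E3
  rw [if_pos (by omega : q ≤ 2*q)] at E1
  have hbe : coeff 0 (b * e) = coeff 0 b * coeff 0 e := by
    have := map_mul (constantCoeff (σ := Fin 2) (R := ℤ)) b e
    rwa [constantCoeff_eq] at this
  rw [hbe, E3, E1] at E2
  simp at E2

set_option maxHeartbeats 1000000 in
set_option synthInstance.maxHeartbeats 400000 in
lemma main (q : ℕ) (ε : MvPolynomial (Fin 2) ℤ) (hε : ε = 1 ∨ ε = 0) :
    letI J := Ideal.span {(X 0 : MvPolynomial (Fin 2) ℤ)^(q+2) - 2 * X 0 * X 1,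
        (X 1 : MvPolynomial (Fin 2) ℤ)^2 - ε * X 0^(q+1) * X 1}
    letI c := Ideal.Quotient.mk J (X 0 : MvPolynomial (Fin 2) ℤ)
    letI y := Ideal.Quotient.mk J (X 1 : MvPolynomial (Fin 2) ℤ)
    c^(2*q+3) = 0 ∧ c^(2*q+2) = 2 * c^(q+1) * y ∧ c^(2*q+2) ≠ 0 := by
  set J : Ideal (MvPolynomial (Fin 2) ℤ) := Ideal.span
    {(X 0 : MvPolynomial (Fin 2) ℤ)^(q+2) - 2 * X 0 * X 1,
     (X 1 : MvPolynomial (Fin 2) ℤ)^2 - ε * X 0^(q+1) * X 1} with hJ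
  set c := Ideal.Quotient.mk J (X 0 : MvPolynomial (Fin 2) ℤ) with hc
  set y := Ideal.Quotient.mk J (X 1 : MvPolynomial (Fin 2) ℤ) with hy
  have hf : Ideal.Quotient.mk J ((X 0 : MvPolynomial (Fin 2) ℤ)^(q+2) - 2*X 0*X 1) = 0 := by
    rw [Ideal.Quotient.eq_zero_iff_mem]
    exact Ideal.subset_span (by simp)
  have hg : Ideal.Quotient.mk J ((X 1 : MvPolynomial (Fin 2) ℤ)^2 - ε * X 0^(q+1) * X 1) = 0 := by
    rw [Ideal.Quotient.eq_zero_iff_mem]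
    exact Ideal.subset_span (by simp)
  have h1 : c^(q+2) = 2*c*y := by
    rw [map_sub, sub_eq_zero] at hf
    simpa [← hc, ← hy, map_pow, map_mul, map_ofNat] using hf
  have h2 : y^2 = (Ideal.Quotient.mk J ε) * c^(q+1) * y := by
    rw [map_sub, sub_eq_zero] at hg
    simpa [← hc, ← hy, map_pow, map_mul] using hg
  have cy2 : c * y^2 = 0 := by
    rcases hε with h | h
    · rw [h, map_one, one_mul] at h2
      linear_combination (-c) * h2 + (-y) * h1
    · rw [h, map_zero, zero_mul, zero_mul] at h2
      rw [h2, mul_zero]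
  have hc0 : c^(2*q+3) = 0 := by
    linear_combination (c^(q+1) + 2*y) * h1 + 4 * cy2
  have heq : c^(2*q+2) = 2 * c^(q+1) * y := by
    linear_combination c^q * h1
  have hne : c^(2*q+2) ≠ 0 := by
    intro h0
    have hm : (X 0 : MvPolynomial (Fin 2) ℤ)^(2*q+2) ∈ J := by
      rw [← Ideal.Quotient.eq_zero_iff_mem]
      rw [map_pow]
      exact h0
    exact nonmem q ε hm
  exact ⟨hc0, heq, hne⟩

/-- In `ℤ[c,y]/(c^p - 2cy, y² - ε c^(p-1) y)` with `ε ≡ p (mod 2)` in `{0,1}`,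
the element `c` is nilpotent with `c^(2p-1) = 0`; moreover
`c^(2p-2) = 2 c^(p-1) y ≠ 0` when `p` is even, and `c^(2p-2) ≠ 0` when `p` is
odd. -/
theorem stmt15 (p : ℕ) (hp : 2 ≤ p) :
    let I := Ideal.span {(X 0 : MvPolynomial (Fin 2) ℤ) ^ p - 2 * X 0 * X 1,
      (X 1 : MvPolynomial (Fin 2) ℤ) ^ 2 -
        (if p % 2 = 1 then 1 else 0) * X 0 ^ (p - 1) * X 1}
    let c := Ideal.Quotient.mk I (X 0 : MvPolynomial (Fin 2) ℤ)
    let y := Ideal.Quotient.mk I (X 1 : MvPolynomial (Fin 2) ℤ)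
    IsNilpotent c ∧ c ^ (2 * p - 1) = 0 ∧
    (Even p → c ^ (2 * p - 2) = 2 * c ^ (p - 1) * y ∧ c ^ (2 * p - 2) ≠ 0) ∧
    (Odd p → c ^ (2 * p - 2) ≠ 0) := by
  obtain ⟨q, rfl⟩ : ∃ q, p = q + 2 := ⟨p - 2, by omega⟩
  intro I c y
  have H := main q (if (q+2) % 2 = 1 then 1 else 0)
    (by split_ifs with h; exacts [Or.inl rfl, Or.inr rfl])
  have e1 : 2*(q+2)-1 = 2*q+3 := by omega
  have e2 : 2*(q+2)-2 = 2*q+2 := by omega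
  rw [e1, e2]
  exact ⟨⟨2*q+3, H.1⟩, H.1, fun _ => ⟨H.2.1, H.2.2⟩, fun _ => H.2.2⟩
end
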